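/- The poset F_1 = D_∞ ⊔ ω is not reversible: there exists an order-preserving bijection from F_1 to itself whose inverse is not order-preserving. -/

import Mathlib

/-- `D_∞`, the countably infinite antichain. -/
def Dinf : Type := ℕ

instance : PartialOrder Dinf where
  le a b := a = b
  le_refl _ := rfl
  le_trans _ _ _ h₁ h₂ := Eq.trans h₁ h₂
  le_antisymm _ _ h _ := h

/-- `F₁ = D_∞ ⊔ ω`. -/
abbrev F1 : Type := Dinf ⊕ ℕ

def Fwd : F1 → F1
  | .inl Nat.zero => .inr 0
  | .inl (Nat.succ m) => .inl m
  | .inr n => .inr (n+1)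

def Bwd : F1 → F1
  | .inl n => .inl (Nat.succ n)
  | .inr 0 => .inl Nat.zero
  | .inr (n+1) => .inr n

lemma left_inv : Function.LeftInverse Bwd Fwd := by
  rintro ((_ | m) | n) <;> rfl

lemma right_inv : Function.RightInverse Bwd Fwd := by
  rintro (n | (_ | n)) <;> rfl

def fEquiv : F1 ≃ F1 := ⟨Fwd, Bwd, left_inv, right_inv⟩

/-- The poset `F1` is not reversible. -/
theorem F1_not_reversible : ∃ f : F1 ≃ F1, Monotone f ∧ ¬ Monotone f.symm := by
  refine ⟨fEquiv, ?_, ?_⟩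
  · rintro (a | a) (b | b) h
    · have hab : a = b := Sum.inl_le_inl_iff.mp h
      subst hab; exact le_refl _
    · exact absurd h (by simp)
    · exact absurd h (by simp)
    · have hab : a ≤ b := Sum.inr_le_inr_iff.mp h
      show Fwd (.inr a) ≤ Fwd (.inr b)
      simp only [Fwd]
      exact Sum.inr_le_inr_iff.mpr (by omega)
  · intro hmono
    have h01 : (Sum.inr 0 : F1) ≤ Sum.inr 1 := Sum.inr_le_inr_iff.mpr (by omega)
    have := hmono h01
    have e0 : fEquiv.symm (Sum.inr 0) = Sum.inl Nat.zero := rfl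
    have e1 : fEquiv.symm (Sum.inr 1) = Sum.inr 0 := rfl
    rw [e0, e1] at this
    exact absurd this (by rintro ⟨⟩)
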